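/- Let r ≥ 4 and let G be a nearly r-regular graph of odd order |G| ≤ 2r−1. Then G has no nontrivial edge-cut of size at most r−1; that is, for every partition of V(G) into two parts each of size at least 2 with both parts inducing connected subgraphs, the number of edges between the parts is at least r. -/

import Mathlib

open SimpleGraph

/-- Number of edges of a graph. -/
noncomputable def edgeCount {V : Type*} (G : SimpleGraph V) : ℕ := G.edgeSet.ncard

/-- Degree of a vertex. -/
noncomputable def deg {V : Type*} (G : SimpleGraph V) (v : V) : ℕ := (G.neighborSet v).ncard

/-- Maximum degree. -/
noncomputable def maxDeg {V : Type*} (G : SimpleGraph V) : ℕ := sSup (Set.range (deg G))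

/-- Matching number: maximum size of a matching. -/
noncomputable def matchNum {V : Type*} (G : SimpleGraph V) : ℕ :=
  sSup {n | ∃ M : G.Subgraph, M.IsMatching ∧ M.edgeSet.ncard = n}

/-- `G` contains a copy of `H` (a subgraph isomorphic to `H`). -/
def CopyIn {α β : Type*} (H : SimpleGraph α) (G : SimpleGraph β) : Prop :=
  ∃ f : H →g G, Function.Injective f

/-- The friendship graph `F_k`: `k` triangles sharing exactly one common vertex (vertex 0). -/
def friendship (k : ℕ) : SimpleGraph (Fin (2 * k + 1)) :=
  SimpleGraph.fromRel (fun a b => a.val = 0 ∨ b.val = 0 ∨ (a.val + 1) / 2 = (b.val + 1) / 2)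

/-- The star `K_{1,m}` with center 0 and `m` leaves. -/
def starGraph (m : ℕ) : SimpleGraph (Fin (m + 1)) :=
  SimpleGraph.fromRel (fun a b => a.val = 0 ∨ b.val = 0)

/-- The matching `mK_2` of `m` disjoint edges. -/
def matchGraph (m : ℕ) : SimpleGraph (Fin (2 * m)) :=
  SimpleGraph.fromRel (fun a b => a.val / 2 = b.val / 2)

/-- Turán number: max edges of an `n`-vertex graph with no copy of `H`. -/
noncomputable def exNum (n : ℕ) {α : Type*} (H : SimpleGraph α) : ℕ :=
  sSup {m | ∃ G : SimpleGraph (Fin n), ¬ CopyIn H G ∧ edgeCount G = m}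

/-- `f(ν, Δ)`: max edges of a graph with matching number ≤ ν and max degree ≤ Δ. -/
noncomputable def fMax (ν Δ : ℕ) : ℕ :=
  sSup {m | ∃ (n : ℕ) (G : SimpleGraph (Fin n)),
    matchNum G ≤ ν ∧ (∀ v, deg G v ≤ Δ) ∧ edgeCount G = m}

/-- A surjective edge-coloring of `K_n` using exactly `r` colors `0, …, r-1`. -/
def IsSurjColoring (n r : ℕ) (c : Sym2 (Fin n) → ℕ) : Prop :=
  (∀ e : Sym2 (Fin n), ¬ e.IsDiag → c e < r) ∧
  ∀ i < r, ∃ e : Sym2 (Fin n), ¬ e.IsDiag ∧ c e = i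

/-- The colored `K_n` contains a rainbow copy of `H`. -/
def RainbowCopy {α : Type*} {n : ℕ} (c : Sym2 (Fin n) → ℕ) (H : SimpleGraph α) : Prop :=
  ∃ f : H →g (⊤ : SimpleGraph (Fin n)), Function.Injective f ∧
    Set.InjOn (fun e => c (Sym2.map (⇑f) e)) H.edgeSet

/-- Anti-Ramsey number for the pair `{K_{1,k+1}, (k+1)K_2}`. -/
noncomputable def arPair (n k : ℕ) : ℕ :=
  sInf {r | ∀ c : Sym2 (Fin n) → ℕ, IsSurjColoring n r c →
    RainbowCopy c (_root_.starGraph (k + 1)) ∨ RainbowCopy c (matchGraph (k + 1))}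

/-- Anti-Ramsey number of the friendship graph `F_k`. -/
noncomputable def arFriend (n k : ℕ) : ℕ :=
  sInf {r | ∀ c : Sym2 (Fin n) → ℕ, IsSurjColoring n r c → RainbowCopy c (friendship k)}

/-- Anti-Ramsey number of a general graph `G`. -/
noncomputable def arGraph (n : ℕ) {α : Type*} (G : SimpleGraph α) : ℕ :=
  sInf {r | ∀ c : Sym2 (Fin n) → ℕ, IsSurjColoring n r c → RainbowCopy c G}

/-- Turán number of the family `{G − e : e ∈ E(G)}`. -/
noncomputable def exFamDel (n : ℕ) {α : Type*} (G : SimpleGraph α) : ℕ :=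
  sSup {m | ∃ H : SimpleGraph (Fin n),
    (∀ e ∈ G.edgeSet, ¬ CopyIn (G.deleteEdges {e}) H) ∧ edgeCount H = m}


lemma deg_eq_degree_aux {V : Type*} [Fintype V] (G : SimpleGraph V) [DecidableRel G.Adj] (v : V) :
    deg G v = G.degree v := by
  simp [deg, SimpleGraph.degree, SimpleGraph.neighborFinset, Set.ncard_eq_toFinset_card']

lemma pairs_card_aux {V : Type*} [Fintype V] [DecidableEq V] (G : SimpleGraph V)
    [DecidableRel G.Adj] (A' : Finset V) :
    (Finset.univ.filter fun p : V × V => p.1 ∈ A' ∧ G.Adj p.1 p.2).card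
      = ∑ v ∈ A', G.degree v := by
  rw [Finset.card_filter, Fintype.sum_prod_type]
  have h : ∀ v : V, (∑ u : V, if v ∈ A' ∧ G.Adj v u then 1 else 0)
      = if v ∈ A' then G.degree v else 0 := by
    intro v
    by_cases hv : v ∈ A'
    · rw [SimpleGraph.degree, SimpleGraph.neighborFinset_eq_filter, Finset.card_filter]
      simp [hv]
    · simp [hv]
  simp only [h]
  rw [Finset.sum_ite_mem, Finset.univ_inter]

lemma arith_aux (a r : ℕ) (h2 : 2 ≤ a) (har : a + 1 ≤ r) :
    a * a + 2 * r ≤ a * r + a + 2 := by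
  obtain ⟨s, rfl⟩ : ∃ s, a = s + 2 := ⟨a - 2, by omega⟩
  obtain ⟨t, rfl⟩ : ∃ t, r = s + 3 + t := ⟨r - (s + 3), by omega⟩
  ring_nf
  nlinarith [Nat.zero_le (s * t)]

lemma cut_lower {V : Type*} [Fintype V] [DecidableEq V] (r : ℕ) (hr : 4 ≤ r)
    (G : SimpleGraph V) [DecidableRel G.Adj]
    (w : V) (hw : deg G w = r - 1) (hreg : ∀ u, u ≠ w → deg G u = r)
    (A B : Set V) (hUnion : A ∪ B = Set.univ) (hDisj : Disjoint A B)
    (hA : 2 ≤ A.ncard) (hAr : A.ncard + 1 ≤ r) :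
    r ≤ {p : V × V | p.1 ∈ A ∧ p.2 ∈ B ∧ G.Adj p.1 p.2}.ncard := by
  haveI : Fintype ↥A := Fintype.ofFinite _
  set A' : Finset V := A.toFinset with hA'
  have hmemA : ∀ x : V, x ∈ A' ↔ x ∈ A := fun x => Set.mem_toFinset
  have hmemB : ∀ x : V, x ∈ B ↔ x ∉ A := by
    intro x
    constructor
    · intro hx hxA; exact Set.disjoint_left.mp hDisj hxA hx
    · intro hx
      have h : x ∈ A ∨ x ∈ B := by rw [← Set.mem_union, hUnion]; trivial
      tauto
  set a := A'.card with ha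
  have haA : A.ncard = a := Set.ncard_eq_toFinset_card' A
  set cutF : Finset (V × V) :=
    Finset.univ.filter (fun p : V × V => p.1 ∈ A' ∧ p.2 ∉ A' ∧ G.Adj p.1 p.2) with hcutF
  have hsetEq : {p : V × V | p.1 ∈ A ∧ p.2 ∈ B ∧ G.Adj p.1 p.2} = ↑cutF := by
    ext p
    simp only [hcutF, Set.mem_setOf_eq, Finset.coe_filter, Finset.mem_univ, true_and,
      Set.mem_setOf_eq, hmemA, hmemB]
  rw [hsetEq, Set.ncard_coe_finset]
  set inF : Finset (V × V) :=
    Finset.univ.filter (fun p : V × V => p.1 ∈ A' ∧ p.2 ∈ A' ∧ G.Adj p.1 p.2) with hinF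
  set allF : Finset (V × V) :=
    Finset.univ.filter (fun p : V × V => p.1 ∈ A' ∧ G.Adj p.1 p.2) with hallF
  have hsplit : inF.card + cutF.card = allF.card := by
    have h1 : inF = allF.filter (fun p => p.2 ∈ A') := by
      ext p; simp only [hinF, hallF, Finset.mem_filter, Finset.mem_univ, true_and]; tauto
    have h2 : cutF = allF.filter (fun p => ¬ p.2 ∈ A') := by
      ext p; simp only [hcutF, hallF, Finset.mem_filter, Finset.mem_univ, true_and]; tauto
    rw [h1, h2]
    exact Finset.card_filter_add_card_filter_not _
  have hallCard : allF.card = ∑ v ∈ A', G.degree v := pairs_card_aux G A'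
  -- degree sum lower bound
  have hsum_ge : a * r ≤ (∑ v ∈ A', G.degree v) + 1 := by
    by_cases hwA : w ∈ A'
    · rw [← Finset.add_sum_erase _ _ hwA]
      have h1 : G.degree w = r - 1 := by rw [← deg_eq_degree_aux]; exact hw
      have h2 : ∑ v ∈ A'.erase w, G.degree v = (a - 1) * r := by
        rw [Finset.sum_congr rfl (fun v hv => ?_), Finset.sum_const,
          Finset.card_erase_of_mem hwA, smul_eq_mul]
        rw [← deg_eq_degree_aux]
        exact hreg v (Finset.ne_of_mem_erase hv)
      rw [h1, h2, Nat.sub_one_mul]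
      have hra : r ≤ a * r := Nat.le_mul_of_pos_left r (by omega)
      omega
    · have h2 : ∑ v ∈ A', G.degree v = a * r := by
        rw [Finset.sum_congr rfl (fun v hv => ?_), Finset.sum_const, smul_eq_mul]
        rw [← deg_eq_degree_aux]
        exact hreg v (fun h => hwA (h ▸ hv))
      omega
  -- internal pairs bound
  have hin_le : inF.card ≤ a * a - a := by
    have hsub : inF ⊆ A'.offDiag := by
      intro p hp
      simp only [hinF, Finset.mem_filter, Finset.mem_univ, true_and] at hp
      exact Finset.mem_offDiag.mpr ⟨hp.1, hp.2.1, G.ne_of_adj hp.2.2⟩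
    calc inF.card ≤ A'.offDiag.card := Finset.card_le_card hsub
      _ = a * a - a := by rw [Finset.offDiag_card]
  have haa : a ≤ a * a := Nat.le_mul_of_pos_left a (by omega)
  have h3 : a * a + 2 * r ≤ a * r + a + 2 :=
    arith_aux a r (haA ▸ hA) (haA ▸ hAr)
  have hfin : a * r ≤ inF.card + cutF.card + 1 := by
    rw [hsplit, hallCard]; exact hsum_ge
  -- combine
  have h2a : 2 ≤ a := haA ▸ hA
  generalize hx : a * r = x at *
  generalize hy : a * a = y at *
  omega

/-- A nearly `r`-regular graph of odd order at most `2r-1` (`r ≥ 4`) has no nontrivial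
edge-cut of size at most `r-1`. -/
theorem stmt5 {V : Type*} [Fintype V] (r : ℕ) (hr : 4 ≤ r) (G : SimpleGraph V)
    (hodd : Odd (Fintype.card V)) (hcard : Fintype.card V ≤ 2 * r - 1)
    (w : V) (hw : deg G w = r - 1) (hreg : ∀ u, u ≠ w → deg G u = r)
    (A B : Set V) (hUnion : A ∪ B = Set.univ) (hDisj : Disjoint A B)
    (hA : 2 ≤ A.ncard) (hB : 2 ≤ B.ncard)
    (hAconn : (G.induce A).Connected) (hBconn : (G.induce B).Connected) :
    r ≤ {p : V × V | p.1 ∈ A ∧ p.2 ∈ B ∧ G.Adj p.1 p.2}.ncard := by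
  classical
  have hAB : A.ncard + B.ncard = Fintype.card V := by
    rw [← Set.ncard_union_eq hDisj A.toFinite B.toFinite, hUnion, Set.ncard_univ,
      Nat.card_eq_fintype_card]
  rcases le_or_gt (A.ncard + 1) r with h | h
  · exact cut_lower r hr G w hw hreg A B hUnion hDisj hA h
  · have hBr : B.ncard + 1 ≤ r := by omega
    have hmain := cut_lower r hr G w hw hreg B A
      (by rw [Set.union_comm]; exact hUnion) hDisj.symm hB hBr
    have himg : {p : V × V | p.1 ∈ A ∧ p.2 ∈ B ∧ G.Adj p.1 p.2}
        = Prod.swap '' {p : V × V | p.1 ∈ B ∧ p.2 ∈ A ∧ G.Adj p.1 p.2} := by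
      ext ⟨x, y⟩
      simp only [Set.mem_setOf_eq, Set.mem_image, Prod.exists, Prod.swap_prod_mk,
        Prod.mk.injEq]
      constructor
      · rintro ⟨hx, hy, hadj⟩; exact ⟨y, x, ⟨hy, hx, hadj.symm⟩, rfl, rfl⟩
      · rintro ⟨u, v, ⟨hu, hv, hadj⟩, rfl, rfl⟩; exact ⟨hv, hu, hadj.symm⟩
    rw [himg, Set.ncard_image_of_injective _ Prod.swap_injective]
    exact hmain
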